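/- Let M be an invertible d×d matrix over K with columns f₁, …, f_d. The following are equivalent: (a) there exist integers a₁, …, a_d such that the R-submodule of K^d generated by z^{a₁}f₁, …, z^{a_d}f_d equals the standard lattice R^d; (b) there exist integers a₁, …, a_d such that the matrix G = M · diag(z^{a₁}, …, z^{a_d}) has all entries in R and its matrix of constant coefficients G(0) ∈ ℂ^{d×d} is invertible; (c) for all i, j ∈ {1,…,d}, min_{1 ≤ k ≤ d} ( val(M_{ik}) + val((M^{-1})_{kj}) ) ≥ 0, the arithmetic and minimum taken in ℤ ∪ {∞}. -/

import Mathlib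

/- For an invertible d×d matrix M over K = ℂ((z)) the following are equivalent:
   (a) the standard lattice R^d lies in the apartment [M], i.e. R^d is generated by
       suitable rescalings z^{aⱼ}fⱼ of the columns of M;
   (b) the columns can be rescaled so that G = M·diag(z^{a₁},…,z^{a_d}) has entries in R
       and invertible constant-coefficient matrix G(0) ∈ ℂ^{d×d};
   (c) every entry of E(M) = val(M) ⊙ val(M⁻¹) is ≥ 0. -/

open Matrix

noncomputable section
set_option synthInstance.maxHeartbeats 1000000
set_option maxHeartbeats 1000000

abbrev K := LaurentSeries ℂ

abbrev Rring : Subring K := (HahnSeries.ofPowerSeries ℤ ℂ).range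

def z : K := HahnSeries.single 1 1

open Classical in
def zval (c : K) : WithTop ℤ := if c = 0 then ⊤ else ((c.order : ℤ) : WithTop ℤ)

/-! ### Auxiliary lemmas -/

lemma z_ne_zero : (z : K) ≠ 0 := HahnSeries.single_ne_zero one_ne_zero

lemma zval_mul (x y : K) : zval (x * y) = zval x + zval y := by
  by_cases hx : x = 0
  · simp [zval, hx]
  by_cases hy : y = 0
  · simp [zval, hy]
  simp only [zval, if_neg hx, if_neg hy, if_neg (mul_ne_zero hx hy),
    HahnSeries.order_mul hx hy]
  push_cast
  rfl

lemma z_zpow (n : ℤ) : z ^ n = (HahnSeries.single n 1 : K) := by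
  have hnat : ∀ m : ℕ, z ^ m = (HahnSeries.single (m : ℤ) 1 : K) := by
    intro m
    induction m with
    | zero => simp [HahnSeries.single_zero_one]
    | succ k ih =>
      rw [pow_succ, ih, z, HahnSeries.single_mul_single]
      push_cast
      ring_nf
  cases n with
  | ofNat m => simpa using hnat m
  | negSucc m =>
    rw [zpow_negSucc]
    refine inv_eq_of_mul_eq_one_left ?_
    rw [hnat (m+1), HahnSeries.single_mul_single]
    rw [show Int.negSucc m + ((m+1:ℕ):ℤ) = 0 by rw [Int.negSucc_eq]; push_cast; ring, one_mul]
    exact HahnSeries.single_zero_one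

lemma z_zpow_ne_zero (n : ℤ) : z ^ n ≠ 0 := zpow_ne_zero n z_ne_zero

lemma zval_z_zpow (n : ℤ) : zval (z ^ n) = (n : WithTop ℤ) := by
  rw [z_zpow, zval, if_neg (HahnSeries.single_ne_zero one_ne_zero),
    HahnSeries.order_single one_ne_zero]

lemma coeff_of_neg {p : PowerSeries ℂ} {n : ℤ} (hn : n < 0) :
    (HahnSeries.ofPowerSeries ℤ ℂ p).coeff n = 0 := by
  rw [show (HahnSeries.ofPowerSeries ℤ ℂ) p = (p : LaurentSeries ℂ) from rfl,
    PowerSeries.coeff_coe, if_pos hn]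

lemma coeff_zero_of (p : PowerSeries ℂ) :
    (HahnSeries.ofPowerSeries ℤ ℂ p).coeff 0 = PowerSeries.constantCoeff (R := ℂ) p := by
  rw [show (HahnSeries.ofPowerSeries ℤ ℂ) p = (p : LaurentSeries ℂ) from rfl,
    PowerSeries.coeff_coe]
  simp

lemma mem_R_iff {x : K} : x ∈ Rring ↔ 0 ≤ zval x := by
  constructor
  · rintro ⟨p, rfl⟩
    by_cases hp : (HahnSeries.ofPowerSeries ℤ ℂ) p = 0
    · simp [zval, hp]
    rw [zval, if_neg hp]
    by_contra h
    push_neg at h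
    have hlt : ((HahnSeries.ofPowerSeries ℤ ℂ) p).order < 0 := by
      exact_mod_cast h
    exact hp (HahnSeries.coeff_order_eq_zero.1 (coeff_of_neg hlt))
  · intro h
    by_cases hx : x = 0
    · exact hx ▸ zero_mem _
    rw [zval, if_neg hx] at h
    have ho : 0 ≤ x.order := by exact_mod_cast h
    refine ⟨PowerSeries.X ^ x.order.toNat * x.powerSeriesPart, ?_⟩
    rw [_root_.map_mul, HahnSeries.ofPowerSeries_X_pow, Int.toNat_of_nonneg ho]
    exact LaurentSeries.single_order_mul_powerSeriesPart x

lemma mem_span_singles {d : ℕ} (x : Fin d → K) :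
    x ∈ Submodule.span Rring (Set.range fun j : Fin d => (Pi.single j 1 : Fin d → K)) ↔
      ∀ i, x i ∈ Rring := by
  rw [Submodule.mem_span_range_iff_exists_fun]
  constructor
  · rintro ⟨c, rfl⟩ i
    have : (∑ j, c j • (Pi.single j 1 : Fin d → K)) i
        = ∑ j, (c j : K) * ((Pi.single j 1 : Fin d → K) i) := by
      rw [Finset.sum_apply]
      exact Finset.sum_congr rfl fun j _ => by simp [Subring.smul_def]
    rw [this]
    refine Subring.sum_mem _ fun j _ => ?_
    rcases eq_or_ne i j with rfl | hij
    · simpa using (c i).2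
    · simp only [Pi.single_apply, if_neg hij, mul_zero]
      exact zero_mem Rring
  · intro h
    refine ⟨fun j => ⟨x j, h j⟩, ?_⟩
    funext i
    rw [Finset.sum_apply]
    have : ∀ j, (((⟨x j, h j⟩ : Rring) • (Pi.single j 1 : Fin d → K)) i)
        = (Pi.single j (x j) : Fin d → K) i := by
      intro j
      simp [Subring.smul_def, Pi.single_apply]
    rw [Finset.sum_congr rfl fun j _ => this j]
    rw [show (∑ j, (Pi.single j (x j) : Fin d → K) i) = (∑ j, (Pi.single j (x j) : Fin d → K)) i
      from (Finset.sum_apply _ _ _).symm, Finset.univ_sum_single]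

lemma lift_matrix {d : ℕ} (G : Matrix (Fin d) (Fin d) K) (hG : ∀ i j, G i j ∈ Rring) :
    ∃ G₁ : Matrix (Fin d) (Fin d) (PowerSeries ℂ),
      ∀ i j, HahnSeries.ofPowerSeries ℤ ℂ (G₁ i j) = G i j := by
  choose G₁ hG₁ using hG
  exact ⟨Matrix.of G₁, hG₁⟩

lemma map_matrix_eq {d : ℕ} (G : Matrix (Fin d) (Fin d) K)
    (G₁ : Matrix (Fin d) (Fin d) (PowerSeries ℂ))
    (h : ∀ i j, HahnSeries.ofPowerSeries ℤ ℂ (G₁ i j) = G i j) :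
    (HahnSeries.ofPowerSeries ℤ ℂ).mapMatrix G₁ = G := by
  refine Matrix.ext fun i j => ?_
  exact h i j

lemma unit_of_inv {d : ℕ} (G N : Matrix (Fin d) (Fin d) K)
    (hGN : G * N = 1) (hG : ∀ i j, G i j ∈ Rring) (hN : ∀ i j, N i j ∈ Rring) :
    IsUnit (Matrix.of fun i j : Fin d => (G i j).coeff 0).det := by
  obtain ⟨G₁, hG₁⟩ := lift_matrix G hG
  obtain ⟨N₁, hN₁⟩ := lift_matrix N hN
  have key : G₁ * N₁ = 1 := by
    have : (HahnSeries.ofPowerSeries ℤ ℂ).mapMatrix (G₁ * N₁) =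
        (HahnSeries.ofPowerSeries ℤ ℂ).mapMatrix 1 := by
      rw [_root_.map_mul, _root_.map_one, map_matrix_eq G G₁ hG₁, map_matrix_eq N N₁ hN₁, hGN]
    refine Matrix.ext fun i j => ?_
    have := congrFun (congrFun (congrArg (fun M : Matrix (Fin d) (Fin d) K => fun i j => M i j)
      this) i) j
    simp only [RingHom.mapMatrix_apply, Matrix.map_apply] at this
    exact HahnSeries.ofPowerSeries_injective this
  have key2 : (PowerSeries.constantCoeff (R := ℂ)).mapMatrix G₁ *
      (PowerSeries.constantCoeff (R := ℂ)).mapMatrix N₁ = 1 := by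
    rw [← _root_.map_mul, key, _root_.map_one]
  have hunit := Matrix.isUnit_det_of_right_inverse key2
  convert hunit using 2
  ext i j
  simp only [Matrix.of_apply, RingHom.mapMatrix_apply, Matrix.map_apply]
  rw [← hG₁ i j, coeff_zero_of]

lemma exists_right_inv {d : ℕ} (G : Matrix (Fin d) (Fin d) K)
    (hG : ∀ i j, G i j ∈ Rring)
    (hdet : IsUnit (Matrix.of fun i j : Fin d => (G i j).coeff 0).det) :
    ∃ N : Matrix (Fin d) (Fin d) K, (∀ i j, N i j ∈ Rring) ∧ G * N = 1 ∧ N * G = 1 := by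
  obtain ⟨G₁, hG₁⟩ := lift_matrix G hG
  have hd : IsUnit G₁.det := by
    rw [PowerSeries.isUnit_iff_constantCoeff, RingHom.map_det]
    convert hdet using 2
    ext i j
    simp only [Matrix.of_apply, RingHom.mapMatrix_apply, Matrix.map_apply]
    rw [← hG₁ i j, coeff_zero_of]
  refine ⟨(HahnSeries.ofPowerSeries ℤ ℂ).mapMatrix G₁⁻¹, fun i j => ⟨G₁⁻¹ i j, rfl⟩, ?_, ?_⟩
  · rw [← map_matrix_eq G G₁ hG₁, ← _root_.map_mul, Matrix.mul_nonsing_inv _ hd, _root_.map_one]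
  · rw [← map_matrix_eq G G₁ hG₁, ← _root_.map_mul, Matrix.nonsing_inv_mul _ hd, _root_.map_one]

lemma b_to_c {d : ℕ} (M : Matrix (Fin d) (Fin d) K) (hM : IsUnit M.det)
    (a : Fin d → ℤ) (hmem : ∀ i j, M i j * z ^ (a j) ∈ Rring)
    (hdet : IsUnit (Matrix.of fun i j : Fin d => (M i j * z ^ (a j)).coeff 0).det)
    (i j k : Fin d) : (0 : WithTop ℤ) ≤ zval (M i k) + zval (M⁻¹ k j) := by
  obtain ⟨N, hNmem, hGN, hNG⟩ :=
    exists_right_inv (Matrix.of fun i j : Fin d => M i j * z ^ (a j)) hmem hdet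
  have hMinv : M⁻¹ = Matrix.diagonal (fun k => z ^ (a k)) * N := by
    apply Matrix.inv_eq_right_inv
    have : M * (Matrix.diagonal (fun k => z ^ (a k)) * N) =
        (Matrix.of fun i j : Fin d => M i j * z ^ (a j)) * N := by
      rw [← Matrix.mul_assoc]
      congr 1
      refine Matrix.ext fun i j => ?_
      rw [Matrix.mul_diagonal]
      rfl
    rw [this, hGN]
  have hMk : zval (M⁻¹ k j) = ((a k : ℤ) : WithTop ℤ) + zval (N k j) := by
    rw [hMinv, Matrix.diagonal_mul, zval_mul, zval_z_zpow]
  have h1 : (0 : WithTop ℤ) ≤ zval (M i k) + ((a k : ℤ) : WithTop ℤ) := by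
    have := mem_R_iff.1 (hmem i k)
    rwa [zval_mul, zval_z_zpow] at this
  have h2 : (0 : WithTop ℤ) ≤ zval (N k j) := mem_R_iff.1 (hNmem k j)
  calc (0 : WithTop ℤ) ≤ (zval (M i k) + ((a k : ℤ) : WithTop ℤ)) + zval (N k j) :=
        add_nonneg h1 h2
    _ = zval (M i k) + (((a k : ℤ) : WithTop ℤ) + zval (N k j)) := add_assoc _ _ _
    _ = zval (M i k) + zval (M⁻¹ k j) := by rw [hMk]

lemma c_to_b {d : ℕ} (M : Matrix (Fin d) (Fin d) K) (hM : IsUnit M.det)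
    (hc : ∀ i j k : Fin d, (0 : WithTop ℤ) ≤ zval (M i k) + zval (M⁻¹ k j)) :
    ∃ a : Fin d → ℤ, (∀ i j, M i j * z ^ (a j) ∈ Rring) ∧
      IsUnit (Matrix.of fun i j : Fin d => (M i j * z ^ (a j)).coeff 0).det := by
  rcases Nat.eq_zero_or_pos d with hd | hd
  · subst hd
    refine ⟨fun _ => 0, fun i => i.elim0, ?_⟩
    rw [Matrix.det_fin_zero]
    exact isUnit_one
  have : Nonempty (Fin d) := ⟨⟨0, hd⟩⟩
  have hne : ∀ j, ∃ i, M i j ≠ 0 := by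
    intro j
    by_contra h
    push_neg at h
    exact hM.ne_zero (Matrix.det_eq_zero_of_column_eq_zero j h)
  obtain ⟨i₀, hi₀⟩ : ∃ i₀ : Fin d → Fin d, ∀ j i, zval (M (i₀ j) j) ≤ zval (M i j) := by
    have h : ∀ j, ∃ i0 : Fin d, ∀ i, zval (M i0 j) ≤ zval (M i j) := by
      intro j
      obtain ⟨i0, -, h⟩ := Finset.exists_min_image Finset.univ (fun i => zval (M i j))
        ⟨Classical.arbitrary _, Finset.mem_univ _⟩
      exact ⟨i0, fun i => h i (Finset.mem_univ i)⟩
    choose i₀ h using h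
    exact ⟨i₀, h⟩
  have hM0 : ∀ j, M (i₀ j) j ≠ 0 := by
    intro j
    obtain ⟨i, hi⟩ := hne j
    intro h0
    have htop : (⊤ : WithTop ℤ) ≤ zval (M i j) := by
      have := hi₀ j i
      rwa [h0, zval, if_pos rfl] at this
    have : zval (M i j) = ⊤ := top_le_iff.mp htop
    rw [zval, if_neg hi] at this
    exact WithTop.coe_ne_top this
  set a : Fin d → ℤ := fun j => -(M (i₀ j) j).order with ha
  have hzv : ∀ j, zval (M (i₀ j) j) = (((M (i₀ j) j).order : ℤ) : WithTop ℤ) := by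
    intro j
    rw [zval, if_neg (hM0 j)]
  have hmem : ∀ i j, M i j * z ^ (a j) ∈ Rring := by
    intro i j
    rw [mem_R_iff, zval_mul, zval_z_zpow]
    have h1 : zval (M (i₀ j) j) + ((a j : ℤ) : WithTop ℤ) ≤
        zval (M i j) + ((a j : ℤ) : WithTop ℤ) := add_le_add_left (hi₀ j i) _
    refine le_trans (le_of_eq ?_) h1
    rw [hzv j, show ((((M (i₀ j) j).order : ℤ)) : WithTop ℤ) + ((a j : ℤ) : WithTop ℤ)
      = ((((M (i₀ j) j).order + a j : ℤ)) : WithTop ℤ) from (WithTop.coe_add _ _).symm]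
    simp [ha]
  set N : Matrix (Fin d) (Fin d) K :=
    Matrix.of fun k j => z ^ ((M (i₀ k) k).order) * M⁻¹ k j with hN
  have hNmem : ∀ k j, N k j ∈ Rring := by
    intro k j
    rw [mem_R_iff]
    show (0 : WithTop ℤ) ≤ zval (z ^ ((M (i₀ k) k).order) * M⁻¹ k j)
    rw [zval_mul, zval_z_zpow, ← hzv k]
    exact hc (i₀ k) j k
  have hGN : (Matrix.of fun i j : Fin d => M i j * z ^ (a j)) * N = 1 := by
    refine Matrix.ext fun i j => ?_
    rw [Matrix.mul_apply]
    have hterm : ∀ k : Fin d, (Matrix.of fun i j : Fin d => M i j * z ^ (a j)) i k * N k j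
        = M i k * M⁻¹ k j := by
      intro k
      show (M i k * z ^ (a k)) * (z ^ ((M (i₀ k) k).order) * M⁻¹ k j) = M i k * M⁻¹ k j
      have hz1 : z ^ (a k) * z ^ ((M (i₀ k) k).order) = 1 := by
        rw [← zpow_add₀ z_ne_zero, ha]
        norm_num
      calc (M i k * z ^ (a k)) * (z ^ ((M (i₀ k) k).order) * M⁻¹ k j)
          = (z ^ (a k) * z ^ ((M (i₀ k) k).order)) * (M i k * M⁻¹ k j) := by ring
        _ = M i k * M⁻¹ k j := by rw [hz1, one_mul]
    rw [Finset.sum_congr rfl fun k _ => hterm k, ← Matrix.mul_apply,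
      Matrix.mul_nonsing_inv M hM]
  exact ⟨a, hmem, unit_of_inv _ N hGN hmem hNmem⟩

lemma a_to_b {d : ℕ} (M : Matrix (Fin d) (Fin d) K) (a : Fin d → ℤ)
    (ha : Submodule.span Rring (Set.range fun j => z ^ (a j) • fun i => M i j) =
      Submodule.span Rring (Set.range fun j : Fin d => (Pi.single j 1 : Fin d → K))) :
    (∀ i j, M i j * z ^ (a j) ∈ Rring) ∧
      IsUnit (Matrix.of fun i j : Fin d => (M i j * z ^ (a j)).coeff 0).det := by
  have hmem : ∀ i j, M i j * z ^ (a j) ∈ Rring := by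
    intro i j
    have hg : (z ^ (a j) • fun i => M i j) ∈
        Submodule.span Rring (Set.range fun j : Fin d => (Pi.single j 1 : Fin d → K)) := by
      rw [← ha]
      exact Submodule.subset_span ⟨j, rfl⟩
    have := (mem_span_singles _).1 hg i
    simpa [mul_comm] using this
  have hrep : ∀ j, ∃ c : Fin d → Rring,
      ∑ k, c k • (z ^ (a k) • fun i => M i k) = (Pi.single j 1 : Fin d → K) := by
    intro j
    refine (Submodule.mem_span_range_iff_exists_fun (R := Rring)).1 ?_
    rw [ha]
    exact Submodule.subset_span ⟨j, rfl⟩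
  choose c hc using hrep
  set N : Matrix (Fin d) (Fin d) K := Matrix.of fun k j => (c j k : K) with hNdef
  have hGN : (Matrix.of fun i j : Fin d => M i j * z ^ (a j)) * N = 1 := by
    refine Matrix.ext fun i j => ?_
    rw [Matrix.mul_apply]
    have hterm : ∀ k : Fin d, (Matrix.of fun i j : Fin d => M i j * z ^ (a j)) i k * N k j
        = ((c j k) • (z ^ (a k) • fun i' => M i' k)) i := by
      intro k
      show (M i k * z ^ (a k)) * (c j k : K) = _
      simp only [Subring.smul_def, Pi.smul_apply, smul_eq_mul]
      ring
    rw [Finset.sum_congr rfl fun k _ => hterm k]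
    rw [show (∑ k, ((c j k) • (z ^ (a k) • fun i' => M i' k)) i)
        = (∑ k, (c j k) • (z ^ (a k) • fun i' => M i' k)) i
      from (Finset.sum_apply _ _ _).symm, hc j]
    rw [Matrix.one_apply, Pi.single_apply]
  exact ⟨hmem, unit_of_inv _ N hGN hmem (fun k j => (c j k).2)⟩

lemma b_to_a {d : ℕ} (M : Matrix (Fin d) (Fin d) K) (a : Fin d → ℤ)
    (hmem : ∀ i j, M i j * z ^ (a j) ∈ Rring)
    (hdet : IsUnit (Matrix.of fun i j : Fin d => (M i j * z ^ (a j)).coeff 0).det) :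
    Submodule.span Rring (Set.range fun j => z ^ (a j) • fun i => M i j) =
      Submodule.span Rring (Set.range fun j : Fin d => (Pi.single j 1 : Fin d → K)) := by
  obtain ⟨N, hNmem, hGN, hNG⟩ :=
    exists_right_inv (Matrix.of fun i j : Fin d => M i j * z ^ (a j)) hmem hdet
  apply le_antisymm
  · rw [Submodule.span_le]
    rintro _ ⟨j, rfl⟩
    rw [SetLike.mem_coe]
    show (z ^ (a j) • fun i => M i j) ∈ _
    rw [mem_span_singles]
    intro i
    have : (z ^ (a j) • fun i => M i j) i = M i j * z ^ (a j) := by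
      simp [mul_comm]
    rw [this]
    exact hmem i j
  · rw [Submodule.span_le]
    rintro _ ⟨j, rfl⟩
    rw [SetLike.mem_coe]
    have hrepr : (Pi.single j 1 : Fin d → K) =
        ∑ k, (⟨N k j, hNmem k j⟩ : Rring) • (z ^ (a k) • fun i => M i k) := by
      funext i
      rw [Finset.sum_apply]
      have hterm : ∀ k : Fin d, ((⟨N k j, hNmem k j⟩ : Rring) • (z ^ (a k) • fun i => M i k)) i
          = (Matrix.of fun i j : Fin d => M i j * z ^ (a j)) i k * N k j := by
        intro k
        show _ = (M i k * z ^ (a k)) * N k j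
        simp only [Subring.smul_def, Pi.smul_apply, smul_eq_mul]
        ring
      rw [Finset.sum_congr rfl fun k _ => hterm k, ← Matrix.mul_apply, hGN]
      rw [Matrix.one_apply, Pi.single_apply]
    show (Pi.single j 1 : Fin d → K) ∈ _
    rw [hrepr]
    exact Submodule.sum_mem _ fun k _ =>
      Submodule.smul_mem _ _ (Submodule.subset_span ⟨k, rfl⟩)

lemma c_iff {d : ℕ} (M : Matrix (Fin d) (Fin d) K) :
    (∀ i j : Fin d, (0 : WithTop ℤ) ≤
      Finset.univ.inf fun k => zval (M i k) + zval (M⁻¹ k j)) ↔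
    (∀ i j k : Fin d, (0 : WithTop ℤ) ≤ zval (M i k) + zval (M⁻¹ k j)) := by
  constructor
  · intro h i j k
    exact le_trans (h i j) (Finset.inf_le (Finset.mem_univ k))
  · intro h i j
    exact Finset.le_inf fun k _ => h i j k

theorem standard_lattice_mem_apartment_iff {d : ℕ}
    (M : Matrix (Fin d) (Fin d) K) (hM : IsUnit M.det) :
    ((∃ a : Fin d → ℤ,
        Submodule.span Rring (Set.range fun j => z ^ (a j) • fun i => M i j) =
          Submodule.span Rring (Set.range fun j : Fin d => (Pi.single j 1 : Fin d → K))) ↔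
      (∀ i j : Fin d, (0 : WithTop ℤ) ≤
        Finset.univ.inf fun k => zval (M i k) + zval (M⁻¹ k j))) ∧
    ((∃ a : Fin d → ℤ,
        (∀ i j : Fin d, M i j * z ^ (a j) ∈ Rring) ∧
        IsUnit (Matrix.of fun i j : Fin d => (M i j * z ^ (a j)).coeff 0).det) ↔
      (∀ i j : Fin d, (0 : WithTop ℤ) ≤
        Finset.univ.inf fun k => zval (M i k) + zval (M⁻¹ k j))) := by
  constructor
  · rw [c_iff M]
    constructor
    · rintro ⟨a, ha⟩
      obtain ⟨h1, h2⟩ := a_to_b M a ha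
      exact fun i j k => b_to_c M hM a h1 h2 i j k
    · intro hc
      obtain ⟨a, h1, h2⟩ := c_to_b M hM hc
      exact ⟨a, b_to_a M a h1 h2⟩
  · rw [c_iff M]
    constructor
    · rintro ⟨a, h1, h2⟩
      exact fun i j k => b_to_c M hM a h1 h2 i j k
    · intro hc
      exact c_to_b M hM hc
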